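/- arXiv:2512.22552 — 2 statements merged into one kernel-verified Lean document; each statement's English description precedes it below -/
import Mathlib

section
/- In the consensus-reachable case with the egoistic property and ‖z_B‖ ≤ 1, ‖Q‖ ≤ 2, the payoff at r_A = 1 is at least the payoff at r_A = 0: R_A(1) − R_A(0) = (1/2)‖Q_A‖cos(θ_A) + (1/4)‖Q‖‖Q_A‖cos(ρ_A − θ_A)cos(θ_A) − (1/4)(z_B^T Q)‖Q_A‖cos(θ_A) − (1/4)(z_B^T Q_A)‖Q‖cos(ρ_A − θ_A) ≥ 0. -/
/-- Consensus-reachable case: with the egoistic property, `‖z_B‖ ≤ 1`, `‖Q‖ ≤ 2`,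
`θ_A ∈ [0, ρ_A]` and `ρ_A ≤ π/2`, the payoff gap between `r_A = 1` and `r_A = 0`,
`(1/2)‖Q_A‖cos θ_A + (1/4)‖Q‖‖Q_A‖cos(ρ_A−θ_A)cos θ_A − (1/4)(z_B^T Q)‖Q_A‖cos θ_A
 − (1/4)(z_B^T Q_A)‖Q‖cos(ρ_A−θ_A)`, is nonnegative. -/
theorem payoff_gap_r_one_vs_zero {k : ℕ}
    (zB Q QA : EuclideanSpace ℝ (Fin k)) (θA ρA : ℝ)
    (hθA : θA ∈ Set.Icc 0 ρA) (hρA : ρA ≤ Real.pi / 2)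
    (hzB : ‖zB‖ ≤ 1) (hQ : ‖Q‖ ≤ 2)
    (hego : (inner ℝ zB QA : ℝ) ≤ ‖QA‖ * Real.cos θA) :
    0 ≤ (1/2) * ‖QA‖ * Real.cos θA
        + (1/4) * ‖Q‖ * ‖QA‖ * Real.cos (ρA - θA) * Real.cos θA
        - (1/4) * (inner ℝ zB Q : ℝ) * ‖QA‖ * Real.cos θA
        - (1/4) * (inner ℝ zB QA : ℝ) * ‖Q‖ * Real.cos (ρA - θA) := by
  obtain ⟨h0, h1⟩ := hθA
  have hc : 0 ≤ Real.cos θA :=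
    Real.cos_nonneg_of_mem_Icc ⟨by linarith [Real.pi_pos], by linarith⟩
  have hd : 0 ≤ Real.cos (ρA - θA) :=
    Real.cos_nonneg_of_mem_Icc ⟨by linarith [Real.pi_pos], by linarith⟩
  have hQ0 : 0 ≤ ‖Q‖ := norm_nonneg Q
  have hQA0 : 0 ≤ ‖QA‖ := norm_nonneg QA
  have hcs : (inner ℝ zB Q : ℝ) ≤ 2 := by
    calc (inner ℝ zB Q : ℝ) ≤ ‖zB‖ * ‖Q‖ := real_inner_le_norm zB Q
    _ ≤ 1 * 2 := by
        apply mul_le_mul hzB hQ hQ0 (by norm_num)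
    _ = 2 := by norm_num
  nlinarith [mul_nonneg hQA0 hc, mul_nonneg hQ0 hd,
    mul_le_mul_of_nonneg_right hego (mul_nonneg hQ0 hd)]
end

section
/- Under the consensus-reachable assumption (ρ_A ≤ π/2), fixing r_A = r_B = 1, the function R_A(θ_A) = p(θ_A)·‖Q_A‖cos(θ_A) + (1 − p(θ_A))·‖Q_A‖·c₄ is concave on θ_A ∈ [0, ρ_A], where p(θ_A) = 1/2 + (‖Q‖/8)(cos(ρ_A − θ_A) − c₃), provided the egoistic property cos(θ_A) ≥ c₄ holds throughout; specifically its second derivative p''(θ_A)(‖Q_A‖cos(θ_A) − ‖Q_A‖c₄) − 2p'(θ_A)‖Q_A‖sin(θ_A) − p(θ_A)‖Q_A‖cos(θ_A) is ≤ 0. -/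
/-- Winning probability as a function of the angle `θ_A`. -/
noncomputable def pAθ (nQ ρA c3 θ : ℝ) : ℝ :=
  1/2 + (nQ / 8) * (Real.cos (ρA - θ) - c3)

/-- Payoff of party A as a function of `θ_A` with `r_A = r_B = 1`. -/
noncomputable def RAθ (nQA nQ ρA c3 c4 θ : ℝ) : ℝ :=
  pAθ nQ ρA c3 θ * (nQA * Real.cos θ) + (1 - pAθ nQ ρA c3 θ) * (nQA * c4)

lemma pAθ_hasDerivAt (nQ ρA c3 θ : ℝ) :
    HasDerivAt (pAθ nQ ρA c3) ((nQ / 8) * Real.sin (ρA - θ)) θ := by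
  have h1 : HasDerivAt (fun x : ℝ => ρA - x) (-1) θ := (hasDerivAt_id θ).const_sub ρA
  have h2 := ((h1.cos.sub_const c3).const_mul (nQ / 8)).const_add (1/2 : ℝ)
  convert h2 using 1
  · rfl
  · rfl
  · rfl
  ring

lemma RAθ_hasDerivAt (nQA nQ ρA c3 c4 θ : ℝ) :
    HasDerivAt (RAθ nQA nQ ρA c3 c4)
      ((nQ / 8) * Real.sin (ρA - θ) * (nQA * Real.cos θ)
        + pAθ nQ ρA c3 θ * (nQA * -Real.sin θ)
        + (-((nQ / 8) * Real.sin (ρA - θ))) * (nQA * c4)) θ := by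
  have hp := pAθ_hasDerivAt nQ ρA c3 θ
  have hc : HasDerivAt (fun x => nQA * Real.cos x) (nQA * -Real.sin θ) θ :=
    (Real.hasDerivAt_cos θ).const_mul nQA
  have h1 := hp.mul hc
  have h2 := (hp.const_sub 1).mul_const (nQA * c4)
  have := h1.add h2
  convert this using 1
  · rfl
  · rfl
  · rfl
  try ring

lemma RAθ_deriv2 (nQA nQ ρA c3 c4 θ : ℝ) :
    HasDerivAt (fun x => (nQ / 8) * Real.sin (ρA - x) * (nQA * Real.cos x)
        + pAθ nQ ρA c3 x * (nQA * -Real.sin x)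
        + (-((nQ / 8) * Real.sin (ρA - x))) * (nQA * c4))
      ((-(nQ / 8) * Real.cos (ρA - θ)) * (nQA * Real.cos θ - nQA * c4)
        - 2 * ((nQ / 8) * Real.sin (ρA - θ)) * (nQA * Real.sin θ)
        - pAθ nQ ρA c3 θ * (nQA * Real.cos θ)) θ := by
  have h1 : HasDerivAt (fun x : ℝ => ρA - x) (-1) θ := (hasDerivAt_id θ).const_sub ρA
  have hs : HasDerivAt (fun x => (nQ / 8) * Real.sin (ρA - x))
      ((nQ / 8) * (Real.cos (ρA - θ) * -1)) θ := h1.sin.const_mul (nQ / 8)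
  have hp := pAθ_hasDerivAt nQ ρA c3 θ
  have hc : HasDerivAt (fun x => nQA * Real.cos x) (nQA * -Real.sin θ) θ :=
    (Real.hasDerivAt_cos θ).const_mul nQA
  have hns : HasDerivAt (fun x => nQA * -Real.sin x) (nQA * -Real.cos θ) θ := by
    have := ((Real.hasDerivAt_sin θ).const_mul nQA).neg
    convert this using 1
    · rfl
    · rfl
    · funext x; rw [Pi.neg_apply]; ring
    · ring
  have hA := hs.mul hc
  have hB := hp.mul hns
  have hC := hs.neg.mul_const (nQA * c4)
  have := (hA.add hB).add hC
  convert this using 1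
  · rfl
  · rfl
  · rfl
  ring

/-- Under the consensus-reachable assumption (`ρ_A ≤ π/2`), with `r_A = r_B = 1`
and the egoistic property `cos θ_A ≥ c₄` throughout, `R_A(θ_A)` is concave on
`[0, ρ_A]`; specifically the expression
`p''(θ)(‖Q_A‖cos θ − ‖Q_A‖c₄) − 2p'(θ)‖Q_A‖sin θ − p(θ)‖Q_A‖cos θ` is `≤ 0`. -/
theorem RA_concave_in_angle (nQA nQ ρA c3 c4 : ℝ)
    (hnQA : 0 ≤ nQA) (hnQ : nQ ∈ Set.Icc (0 : ℝ) 2)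
    (hρA : ρA ∈ Set.Icc 0 (Real.pi / 2))
    (hc3 : c3 ∈ Set.Icc (-1 : ℝ) 1) (hc4 : c4 ∈ Set.Icc (-1 : ℝ) 1)
    (hego : ∀ θ ∈ Set.Icc 0 ρA, c4 ≤ Real.cos θ) :
    ConcaveOn ℝ (Set.Icc 0 ρA) (RAθ nQA nQ ρA c3 c4) ∧
    (∀ θ ∈ Set.Icc 0 ρA,
      (-(nQ / 8) * Real.cos (ρA - θ)) * (nQA * Real.cos θ - nQA * c4)
        - 2 * ((nQ / 8) * Real.sin (ρA - θ)) * (nQA * Real.sin θ)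
        - pAθ nQ ρA c3 θ * (nQA * Real.cos θ) ≤ 0) := by
  obtain ⟨hnQ0, hnQ2⟩ := hnQ
  obtain ⟨hρ0, hρπ⟩ := hρA
  have hπ := Real.pi_pos
  have key : ∀ θ ∈ Set.Icc (0:ℝ) ρA,
      (-(nQ / 8) * Real.cos (ρA - θ)) * (nQA * Real.cos θ - nQA * c4)
        - 2 * ((nQ / 8) * Real.sin (ρA - θ)) * (nQA * Real.sin θ)
        - pAθ nQ ρA c3 θ * (nQA * Real.cos θ) ≤ 0 := by
    intro θ ⟨h0, hρ⟩
    have hcosθ : 0 ≤ Real.cos θ :=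
      Real.cos_nonneg_of_mem_Icc ⟨by linarith, by linarith⟩
    have hsinθ : 0 ≤ Real.sin θ :=
      Real.sin_nonneg_of_nonneg_of_le_pi h0 (by linarith)
    have hcosρ : 0 ≤ Real.cos (ρA - θ) :=
      Real.cos_nonneg_of_mem_Icc ⟨by linarith, by linarith⟩
    have hsinρ : 0 ≤ Real.sin (ρA - θ) :=
      Real.sin_nonneg_of_nonneg_of_le_pi (by linarith) (by linarith)
    have hc4' : c4 ≤ Real.cos θ := hego θ ⟨h0, hρ⟩
    have hp0 : 0 ≤ pAθ nQ ρA c3 θ := by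
      have h1 : Real.cos (ρA - θ) ≤ 1 := Real.cos_le_one _
      unfold pAθ
      nlinarith [hc3.2, hc3.1]
    have t1 : (-(nQ / 8) * Real.cos (ρA - θ)) * (nQA * Real.cos θ - nQA * c4) ≤ 0 := by
      nlinarith [mul_nonneg (mul_nonneg (by linarith : (0:ℝ) ≤ nQ/8) hcosρ)
        (mul_nonneg hnQA (by linarith : (0:ℝ) ≤ Real.cos θ - c4))]
    have t2 : 0 ≤ 2 * ((nQ / 8) * Real.sin (ρA - θ)) * (nQA * Real.sin θ) := by positivity
    have t3 : 0 ≤ pAθ nQ ρA c3 θ * (nQA * Real.cos θ) := by positivity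
    linarith
  refine ⟨?_, key⟩
  apply concaveOn_of_hasDerivWithinAt2_nonpos (f' := fun θ =>
      (nQ / 8) * Real.sin (ρA - θ) * (nQA * Real.cos θ)
        + pAθ nQ ρA c3 θ * (nQA * -Real.sin θ)
        + (-((nQ / 8) * Real.sin (ρA - θ))) * (nQA * c4))
    (f'' := fun θ =>
      (-(nQ / 8) * Real.cos (ρA - θ)) * (nQA * Real.cos θ - nQA * c4)
        - 2 * ((nQ / 8) * Real.sin (ρA - θ)) * (nQA * Real.sin θ)
        - pAθ nQ ρA c3 θ * (nQA * Real.cos θ)) (convex_Icc 0 ρA)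
  · exact fun θ _ => (RAθ_hasDerivAt nQA nQ ρA c3 c4 θ).continuousAt.continuousWithinAt
  · exact fun θ _ => (RAθ_hasDerivAt nQA nQ ρA c3 c4 θ).hasDerivWithinAt
  · exact fun θ _ => (RAθ_deriv2 nQA nQ ρA c3 c4 θ).hasDerivWithinAt
  · exact fun θ hθ => key θ (interior_subset hθ)
end
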